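/- Let μ be a measure on ℝ with finite moments of all orders, h a monic polynomial of degree N with zeros α_1,…,α_p of multiplicities β_1,…,β_p, and define dμ₀ = h dμ. Let B be a symmetric bilinear form with B(hf,g) = B(f,hg) = ∫ fg dμ₀ for all polynomials f,g. Then there exists a symmetric N×N real matrix M such that for all polynomials f, g: B(f,g) = ∫ f g dμ + F^T M G, where F = (f(α_1),…,f^{(β_1−1)}(α_1),…,f(α_p),…,f^{(β_p−1)}(α_p))^T and G is the analogous vector for g. In particular, B is a discrete Sobolev-type bilinear form. -/

import Mathlib

open Polynomial MeasureTheory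

theorem geronimus_is_discrete_sobolev (p N : ℕ) (hN : 1 ≤ N) (α : Fin p → ℝ)
    (hα : Function.Injective α) (β : Fin p → ℕ) (hβ : ∀ i, 1 ≤ β i)
    (hsum : ∑ i, β i = N)
    (h : Polynomial ℝ) (hh : h = ∏ i, (X - C (α i)) ^ β i)
    (μ : Measure ℝ) (hint : ∀ f : Polynomial ℝ, Integrable (fun t => f.eval t) μ)
    (B : Polynomial ℝ →ₗ[ℝ] Polynomial ℝ →ₗ[ℝ] ℝ)
    (hsym : ∀ f g, B f g = B g f)
    (hB : ∀ f g, B (h * f) g = ∫ t, f.eval t * g.eval t * h.eval t ∂μ)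
    (hB' : ∀ f g, B f (h * g) = ∫ t, f.eval t * g.eval t * h.eval t ∂μ) :
    ∃ M : Matrix ((i : Fin p) × Fin (β i)) ((i : Fin p) × Fin (β i)) ℝ,
      M.IsSymm ∧
      ∀ f g : Polynomial ℝ,
        B f g = (∫ t, f.eval t * g.eval t ∂μ) +
          ∑ r : (i : Fin p) × Fin (β i), ∑ s : (i : Fin p) × Fin (β i),
            M r s * (Polynomial.derivative^[(r.2 : ℕ)] f).eval (α r.1) *
              (Polynomial.derivative^[(s.2 : ℕ)] g).eval (α s.1) := by
  classical
  set ι := (i : Fin p) × Fin (β i) with hι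
  -- the "jet" linear map
  let J : Polynomial ℝ →ₗ[ℝ] (ι → ℝ) :=
    LinearMap.pi fun r => (Polynomial.leval (α r.1)).comp
      ((Polynomial.derivative : Polynomial ℝ →ₗ[ℝ] Polynomial ℝ) ^ (r.2 : ℕ))
  have hJ : ∀ (f : Polynomial ℝ) (r : ι),
      J f r = (Polynomial.derivative^[(r.2 : ℕ)] f).eval (α r.1) := by
    intro f r
    simp [J, Module.End.pow_apply]
  have hmono : h.Monic := by
    rw [hh]; exact monic_prod_of_monic _ _ fun i _ => (monic_X_sub_C (α i)).pow _
  have hdeg : h.natDegree = N := by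
    rw [hh, natDegree_prod_of_monic _ _ fun i _ => (monic_X_sub_C (α i)).pow _]
    simp [natDegree_pow, hsum]
  -- kernel of J contains only multiples of h
  have hker : ∀ f : Polynomial ℝ, J f = 0 → h ∣ f := by
    intro f hf
    rcases eq_or_ne f 0 with rfl | hf0
    · exact dvd_zero _
    rw [hh]
    refine Finset.prod_dvd_of_coprime ?_ ?_
    · exact ((pairwise_coprime_X_sub_C hα).mono fun i j hij => hij.pow).set_pairwise _
    · intro i _
      refine dvd_trans (pow_dvd_pow _ ?_) (f.pow_rootMultiplicity_dvd (α i))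
      have hlt : β i - 1 < f.rootMultiplicity (α i) := by
        refine lt_rootMultiplicity_of_isRoot_iterate_derivative hf0 fun m hm => ?_
        have hmβ : m < β i := lt_of_le_of_lt hm (Nat.sub_lt (hβ i) one_pos)
        have h0 := congrFun hf (⟨i, ⟨m, hmβ⟩⟩ : ι)
        rw [hJ] at h0
        exact h0
      omega
  -- J is surjective
  have hcard : Fintype.card ι = N := by
    simp [hι, Fintype.card_sigma, hsum]
  haveI : FiniteDimensional ℝ (Polynomial.degreeLT ℝ N) :=
    Module.Finite.equiv (Polynomial.degreeLTEquiv ℝ N).symm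
  have hJsurj : Function.Surjective J := by
    let J' := J.comp (Polynomial.degreeLT ℝ N).subtype
    have hinj : Function.Injective J' := by
      rw [← LinearMap.ker_eq_bot, LinearMap.ker_eq_bot']
      rintro ⟨f, hf⟩ hf0
      have hdvd : h ∣ f := hker f hf0
      have hf' : f = 0 := by
        by_contra hf0'
        have h1 := Polynomial.degree_le_of_dvd hdvd hf0'
        rw [Polynomial.degree_eq_natDegree hmono.ne_zero, hdeg] at h1
        exact absurd (Polynomial.mem_degreeLT.mp hf) (not_lt.mpr h1)
      exact Subtype.ext hf'
    have hsurj' : Function.Surjective J' := by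
      refine (LinearMap.injective_iff_surjective_of_finrank_eq_finrank ?_).mp hinj
      rw [(Polynomial.degreeLTEquiv ℝ N).finrank_eq, Module.finrank_fin_fun,
        Module.finrank_fintype_fun_eq_card, hcard]
    intro v
    obtain ⟨x, hx⟩ := hsurj' v
    exact ⟨x.1, hx⟩
  -- pick the dual polynomials
  choose e he using fun r : ι => hJsurj (Pi.single r 1)
  -- the integral as a linear functional
  let Iμ : Polynomial ℝ →ₗ[ℝ] ℝ :=
    { toFun := fun f => ∫ t, f.eval t ∂μ
      map_add' := by
        intro f g
        have hfg : (fun t => (f + g).eval t) = fun t => f.eval t + g.eval t := by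
          funext t; simp
        simp only [hfg]
        exact integral_add (hint f) (hint g)
      map_smul' := by
        intro c f
        have hcf : (fun t => (c • f).eval t) = fun t => c • f.eval t := by
          funext t; simp
        simp only [hcf]
        rw [integral_smul]
        simp }
  have hIapp : ∀ f : Polynomial ℝ, Iμ f = ∫ t, f.eval t ∂μ := fun _ => rfl
  have hIμ : ∀ f g : Polynomial ℝ, Iμ (f * g) = ∫ t, f.eval t * g.eval t ∂μ := by
    intro f g
    rw [hIapp]
    congr 1
    funext t
    simp
  -- the "discrete part" bilinear function
  set D : Polynomial ℝ → Polynomial ℝ → ℝ := fun f g => B f g - Iμ (f * g) with hD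
  have hDsym : ∀ f g, D f g = D g f := by
    intro f g; simp only [hD]; rw [hsym f g, mul_comm]
  have hDadd : ∀ f₁ f₂ g, D (f₁ + f₂) g = D f₁ g + D f₂ g := by
    intro f₁ f₂ g
    simp only [hD]
    rw [map_add, LinearMap.add_apply, add_mul, map_add]
    ring
  have hDh : ∀ q g, D (h * q) g = 0 := by
    intro q g
    have hi : Iμ (h * q * g) = ∫ t, q.eval t * g.eval t * h.eval t ∂μ := by
      rw [hIapp]
      congr 1
      funext t
      simp only [eval_mul]
      ring
    simp only [hD]
    rw [hB q g, hi]
    ring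
  have hexp : ∀ (c : ι → ℝ) (g : Polynomial ℝ),
      D (∑ r, c r • e r) g = ∑ r, c r * D (e r) g := by
    intro c g
    have h1 : B (∑ r, c r • e r) g = ∑ r, c r * B (e r) g := by
      rw [map_sum, LinearMap.sum_apply]
      refine Finset.sum_congr rfl fun r _ => ?_
      rw [_root_.map_smul, LinearMap.smul_apply, smul_eq_mul]
    have h2 : Iμ ((∑ r, c r • e r) * g) = ∑ r, c r * Iμ (e r * g) := by
      rw [Finset.sum_mul]
      simp_rw [smul_mul_assoc]
      rw [map_sum]
      refine Finset.sum_congr rfl fun r _ => ?_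
      rw [_root_.map_smul, smul_eq_mul]
    simp only [hD]
    rw [h1, h2, ← Finset.sum_sub_distrib]
    exact Finset.sum_congr rfl fun r _ => (mul_sub _ _ _).symm
  -- decomposition of D
  have hdecomp : ∀ f g : Polynomial ℝ, D f g = ∑ r, J f r * D (e r) g := by
    intro f g
    have hJf : J (∑ r, J f r • e r) = J f := by
      rw [map_sum]
      funext s
      rw [Finset.sum_apply]
      have hterm : ∀ r : ι, J (J f r • e r) s = J f r * (Pi.single r 1 : ι → ℝ) s := by
        intro r; rw [_root_.map_smul, he]; simp
      simp_rw [hterm]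
      rw [Finset.sum_eq_single s]
      · simp
      · intro r _ hrs
        rw [Pi.single_eq_of_ne (Ne.symm hrs)]
        ring
      · intro hs; exact absurd (Finset.mem_univ s) hs
    obtain ⟨q, hq⟩ := hker (f - ∑ r, J f r • e r) (by rw [map_sub, hJf, sub_self])
    have hf : h * q + ∑ r, J f r • e r = f := by
      rw [← hq]; ring
    have hstep := hDadd (h * q) (∑ r, J f r • e r) g
    rw [hf, hDh, zero_add, hexp] at hstep
    exact hstep
  refine ⟨fun r s => D (e r) (e s), ?_, ?_⟩
  · show _ = _
    funext r s
    show D (e s) (e r) = D (e r) (e s)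
    exact hDsym (e s) (e r)
  · intro f g
    have h2 : ∀ r, D (e r) g = ∑ s, J g s * D (e r) (e s) := by
      intro r
      rw [hDsym, hdecomp g (e r)]
      exact Finset.sum_congr rfl fun s _ => by rw [hDsym]
    have hkey : B f g - Iμ (f * g) = ∑ r, ∑ s, D (e r) (e s) * J f r * J g s := by
      rw [show B f g - Iμ (f * g) = D f g from rfl, hdecomp f g]
      refine Finset.sum_congr rfl fun r _ => ?_
      rw [h2 r, Finset.mul_sum]
      exact Finset.sum_congr rfl fun s _ => by ring
    have hfin : B f g = Iμ (f * g) + ∑ r, ∑ s, D (e r) (e s) * J f r * J g s := by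
      rw [← hkey]; ring
    rw [hfin, hIμ f g]
    congr 1
    refine Finset.sum_congr rfl fun r _ => Finset.sum_congr rfl fun s _ => ?_
    rw [hJ, hJ]
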